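/- Fix real constants k_B > 0, T > 0, V₀ > 0, a natural number N ≥ 1, and κ > 0. Then for every V > 0, the Kaniadakis PDM ideal gas pressure P_κ(V) = κ N k_B T / ( V₀ √(1 + κ²(V/V₀)²) · arcsinh(κ V/V₀) ) is strictly less than the standard ideal gas pressure P(V) = N k_B T / V. Equivalently, w < √(1+w²)·arcsinh(w) for every w > 0. -/

import Mathlib

lemma sinh_lt_mul_cosh {y : ℝ} (hy : 0 < y) : Real.sinh y < y * Real.cosh y := by
  have h : StrictMonoOn (fun y : ℝ => y * Real.cosh y - Real.sinh y) (Set.Ici 0) := by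
    apply strictMonoOn_of_deriv_pos (convex_Ici 0)
    · fun_prop
    · intro x hx
      simp only [interior_Ici, Set.mem_Ioi] at hx
      have : deriv (fun y : ℝ => y * Real.cosh y - Real.sinh y) x = x * Real.sinh x := by
        rw [deriv_fun_sub (by fun_prop) (by fun_prop), deriv_fun_mul (by fun_prop) (by fun_prop)]
        simp [Real.deriv_cosh]
        try ring
      rw [this]
      exact mul_pos hx (Real.sinh_pos_iff.2 hx)
  have := h (Set.self_mem_Ici) (Set.mem_Ici.2 hy.le) hy
  simpa using this

lemma key {w : ℝ} (hw : 0 < w) : w < Real.sqrt (1 + w ^ 2) * Real.arsinh w := by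
  have hy : 0 < Real.arsinh w := Real.arsinh_pos_iff.2 hw
  have := sinh_lt_mul_cosh hy
  rw [Real.sinh_arsinh, Real.cosh_arsinh] at this
  linarith

theorem stmt_11 (kB T V₀ κ : ℝ) (N : ℕ)
    (hkB : 0 < kB) (hT : 0 < T) (hV₀ : 0 < V₀) (hN : 1 ≤ N) (hκ : 0 < κ) :
    (∀ V : ℝ, 0 < V →
      κ * (N : ℝ) * kB * T /
          (V₀ * Real.sqrt (1 + κ ^ 2 * (V / V₀) ^ 2) * Real.arsinh (κ * V / V₀))
        < (N : ℝ) * kB * T / V) ∧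
    (∀ w : ℝ, 0 < w → w < Real.sqrt (1 + w ^ 2) * Real.arsinh w) := by
  constructor
  · intro V hV
    set w := κ * V / V₀ with hw
    have hwpos : 0 < w := by positivity
    have hkey : w < Real.sqrt (1 + w ^ 2) * Real.arsinh w := key hwpos
    have hSeq : (1 : ℝ) + κ ^ 2 * (V / V₀) ^ 2 = 1 + w ^ 2 := by
      rw [hw]; ring
    rw [hSeq]
    have hS : 0 < Real.sqrt (1 + w ^ 2) := Real.sqrt_pos.2 (by positivity)
    have hA : 0 < Real.arsinh w := Real.arsinh_pos_iff.2 hwpos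
    have hN' : (0 : ℝ) < N := by exact_mod_cast hN.trans_lt' (by norm_num)
    rw [div_lt_div_iff₀ (by positivity) hV]
    have h2 : κ * V < Real.sqrt (1 + w ^ 2) * Real.arsinh w * V₀ := by
      have := (div_lt_iff₀ hV₀).mp (hw ▸ hkey)
      linarith
    nlinarith [mul_pos (mul_pos hN' hkB) hT]
  · intro w hw; exact key hw
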